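/- Let P be any string of length n with δ distinct characters, where δ ≥ 1. Let 'start' be the position of the last occurrence of the character whose last occurrence in P has the smallest index, and let 'end' be the position, among first occurrences after 'start', of the character whose first occurrence to the right of 'start' has the largest index. Then every distinct character of P occurs at least once in the interval [start, end], and hence end − start + 1 ≥ δ. -/

import Mathlib

/-- Index of the last occurrence of `c` in `P`. -/
noncomputable def lastOcc {α : Type*} (P : List α) (c : α) : ℕ :=
  sSup {i | ∃ h : i < P.length, P.get ⟨i, h⟩ = c}

/-- Index of the first occurrence of `c` in `P` at or after position `s`. -/
noncomputable def firstOccFrom {α : Type*} (P : List α) (s : ℕ) (c : α) : ℕ :=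
  sInf {i | s ≤ i ∧ ∃ h : i < P.length, P.get ⟨i, h⟩ = c}

lemma lastOcc_spec {α : Type*} {P : List α} {c : α} (hc : c ∈ P) :
    ∃ h : lastOcc P c < P.length, P.get ⟨lastOcc P c, h⟩ = c := by
  have hne : {i | ∃ h : i < P.length, P.get ⟨i, h⟩ = c}.Nonempty := by
    obtain ⟨n, hn⟩ := List.mem_iff_get.mp hc
    exact ⟨n.1, n.2, by simpa using hn⟩
  have hbdd : BddAbove {i | ∃ h : i < P.length, P.get ⟨i, h⟩ = c} :=
    ⟨P.length, fun i hi => le_of_lt hi.1⟩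
  exact Nat.sSup_mem hne hbdd

lemma firstOccFrom_spec {α : Type*} {P : List α} {s : ℕ} {c : α}
    (hne : {i | s ≤ i ∧ ∃ h : i < P.length, P.get ⟨i, h⟩ = c}.Nonempty) :
    s ≤ firstOccFrom P s c ∧
      ∃ h : firstOccFrom P s c < P.length, P.get ⟨firstOccFrom P s c, h⟩ = c :=
  Nat.sInf_mem hne

/-- Let `start` be the position of the last occurrence of the character whose last occurrence in
`P` has the smallest index, and `fin` the largest among first occurrences after `start`.
Then every distinct character of `P` occurs in `[start, fin]`, hence `fin - start + 1 ≥ δ`. -/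
theorem stmt1 {α : Type*} [DecidableEq α] (P : List α) (hP : P ≠ [])
    (δ : ℕ) (hδ : δ = P.toFinset.card) (hδ1 : 1 ≤ δ)
    (start fin : ℕ)
    (hstart : start = sInf {k | ∃ c ∈ P, k = lastOcc P c})
    (hfin : fin = sSup {k | ∃ c ∈ P, k = firstOccFrom P start c}) :
    (∀ c ∈ P, ∃ i, start ≤ i ∧ i ≤ fin ∧ ∃ h : i < P.length, P.get ⟨i, h⟩ = c) ∧
      δ ≤ fin + 1 - start := by
  -- start ≤ lastOcc P c for any c ∈ P
  have hstart_le : ∀ c ∈ P, start ≤ lastOcc P c := by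
    intro c hc
    rw [hstart]
    exact Nat.sInf_le ⟨c, hc, rfl⟩
  -- the firstOccFrom set is nonempty for c ∈ P
  have hfne : ∀ c ∈ P,
      {i | start ≤ i ∧ ∃ h : i < P.length, P.get ⟨i, h⟩ = c}.Nonempty := by
    intro c hc
    exact ⟨lastOcc P c, hstart_le c hc, lastOcc_spec hc⟩
  -- fin is an upper bound
  have hfin_ge : ∀ c ∈ P, firstOccFrom P start c ≤ fin := by
    intro c hc
    rw [hfin]
    have hbdd : BddAbove {k | ∃ c ∈ P, k = firstOccFrom P start c} := by
      refine ⟨P.length, fun k hk => ?_⟩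
      obtain ⟨c', hc', rfl⟩ := hk
      exact le_of_lt (firstOccFrom_spec (hfne c' hc')).2.1
    exact le_csSup hbdd ⟨c, hc, rfl⟩
  have main : ∀ c ∈ P, ∃ i, start ≤ i ∧ i ≤ fin ∧
      ∃ h : i < P.length, P.get ⟨i, h⟩ = c := by
    intro c hc
    obtain ⟨h1, h2⟩ := firstOccFrom_spec (hfne c hc)
    exact ⟨firstOccFrom P start c, h1, hfin_ge c hc, h2⟩
  refine ⟨main, ?_⟩
  -- cardinality bound via injection into Icc start fin
  have hcard : P.toFinset.card ≤ (Finset.Icc start fin).card := by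
    apply Finset.card_le_card_of_injOn (fun c => firstOccFrom P start c)
    · intro c hc
      rw [Finset.mem_coe, List.mem_toFinset] at hc
      obtain ⟨h1, h2⟩ := firstOccFrom_spec (hfne c hc)
      exact Finset.mem_Icc.mpr ⟨h1, hfin_ge c hc⟩
    · intro c1 hc1 c2 hc2 heq
      simp only [Finset.mem_coe, List.mem_toFinset] at hc1 hc2
      obtain ⟨h1, e1⟩ := (firstOccFrom_spec (hfne c1 hc1)).2
      obtain ⟨h2, e2⟩ := (firstOccFrom_spec (hfne c2 hc2)).2
      rw [← e1, ← e2]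
      simp only [heq]
  rw [hδ]
  calc P.toFinset.card ≤ (Finset.Icc start fin).card := hcard
    _ = fin + 1 - start := Nat.card_Icc start fin
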